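/- Let q_m(z) = (z−s_1)⋯(z−s_m) with the s_i not eigenvalues of A ∈ ℝ^{n×n} nor of T ∈ ℝ^{2m×2m}, let V ∈ ℝ^{n×2mp} have F-orthonormal block columns with V_1 = V̂/‖V̂‖_F, and suppose P(A^j q_m(A)^{-1} V̂) = V(T^j (V^T ◇ (q_m(A)^{-1}V̂)) ⊗ I_p) for all 0 ≤ j ≤ 2m, where P is the F-orthogonal projector onto the span of the block columns, and q_m(A)^{-1}V̂ lies in that span. Then V^T ◇ (q_m(A)^{-1}V̂) = ‖V̂‖_F · q_m(T)^{-1} e_1. -/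

import Mathlib

open Matrix BigOperators

/-- Frobenius inner product `⟨X,Y⟩_F = trace(Yᵀ X)`. -/
noncomputable def finner {n p : ℕ} (X Y : Matrix (Fin n) (Fin p) ℝ) : ℝ :=
  Matrix.trace (Yᵀ * X)

/-- Frobenius norm. -/
noncomputable def fnorm {n p : ℕ} (X : Matrix (Fin n) (Fin p) ℝ) : ℝ :=
  Real.sqrt (finner X X)

/-- The F-orthogonal projection `P(X) = ∑ i, ⟨X, V i⟩_F • V i`. -/
noncomputable def Pproj {n p s : ℕ} (V : Fin s → Matrix (Fin n) (Fin p) ℝ)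
    (X : Matrix (Fin n) (Fin p) ℝ) : Matrix (Fin n) (Fin p) ℝ :=
  ∑ i, finner X (V i) • V i

lemma finner_smul_left {n p : ℕ} (a : ℝ) (X Y : Matrix (Fin n) (Fin p) ℝ) :
    finner (a • X) Y = a * finner X Y := by
  simp [finner, Matrix.mul_smul, Matrix.trace_smul, smul_eq_mul]

lemma finner_add_left {n p : ℕ} (X X' Y : Matrix (Fin n) (Fin p) ℝ) :
    finner (X + X') Y = finner X Y + finner X' Y := by
  simp [finner, Matrix.mul_add]

lemma finner_sum_left {n p : ℕ} {ι : Type*} (s : Finset ι)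
    (f : ι → Matrix (Fin n) (Fin p) ℝ) (Y : Matrix (Fin n) (Fin p) ℝ) :
    finner (∑ i ∈ s, f i) Y = ∑ i ∈ s, finner (f i) Y := by
  simp [finner, Matrix.mul_sum]

lemma finner_smul_right {n p : ℕ} (a : ℝ) (X Y : Matrix (Fin n) (Fin p) ℝ) :
    finner X (a • Y) = a * finner X Y := by
  simp [finner, Matrix.transpose_smul, Matrix.smul_mul, smul_eq_mul]

lemma finner_self_nonneg {n p : ℕ} (X : Matrix (Fin n) (Fin p) ℝ) :
    0 ≤ finner X X := by
  simp only [finner, Matrix.trace, Matrix.diag, Matrix.mul_apply, Matrix.transpose_apply]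
  exact Finset.sum_nonneg fun i _ => Finset.sum_nonneg fun k _ => mul_self_nonneg _

/-- with `q_m(z) = (z−s₁)⋯(z−s_m)`, if the exactness identity
`P(A^j q_m(A)⁻¹ V̂) = V(T^j (Vᵀ ◇ (q_m(A)⁻¹ V̂)) ⊗ I_p)` holds for all `0 ≤ j ≤ 2m`
and `q_m(A)⁻¹ V̂` lies in the span of the block columns, then
`Vᵀ ◇ (q_m(A)⁻¹ V̂) = ‖V̂‖_F · q_m(T)⁻¹ e₁`. -/
theorem diamond_coords_of_exactness {n p m : ℕ} (hm : 0 < m)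
    (A : Matrix (Fin n) (Fin n) ℝ) (ss : Fin m → ℝ)
    (T : Matrix (Fin (2 * m)) (Fin (2 * m)) ℝ)
    (hAinv : IsUnit ((List.ofFn fun i : Fin m => A - ss i • 1).prod))
    (hTinv : IsUnit ((List.ofFn fun i : Fin m => T - ss i • 1).prod))
    (V : Fin (2 * m) → Matrix (Fin n) (Fin p) ℝ)
    (horth : ∀ i j, finner (V i) (V j) = if i = j then 1 else 0)
    (Vhat : Matrix (Fin n) (Fin p) ℝ) (hVhat : Vhat ≠ 0)
    (hV1 : V ⟨0, by omega⟩ = (fnorm Vhat)⁻¹ • Vhat)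
    (q : Matrix (Fin n) (Fin p) ℝ)
    (hq : q = ((List.ofFn fun i : Fin m => A - ss i • 1).prod)⁻¹ * Vhat)
    (hmem : q ∈ Submodule.span ℝ (Set.range V))
    (hexact : ∀ j ≤ 2 * m,
      Pproj V (A ^ j * q) = ∑ i, ((T ^ j).mulVec (fun i => finner q (V i))) i • V i) :
    (fun i => finner q (V i)) =
      fnorm Vhat •
        (((List.ofFn fun i : Fin m => T - ss i • 1).prod)⁻¹).mulVec
          (Pi.single ⟨0, by omega⟩ 1) := by
  classical
  set c : Fin (2 * m) → ℝ := fun i => finner q (V i) with hc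
  set P : Polynomial ℝ := (List.ofFn fun i : Fin m => Polynomial.X - Polynomial.C (ss i)).prod
    with hP
  -- evaluation of the polynomial at a square matrix gives the list product
  have heval : ∀ (N : ℕ) (B : Matrix (Fin N) (Fin N) ℝ),
      Polynomial.aeval B P = (List.ofFn fun i : Fin m => B - ss i • 1).prod := by
    intro N B
    rw [hP, map_list_prod, List.map_ofFn]
    have h : (⇑(Polynomial.aeval B) ∘ fun i : Fin m => Polynomial.X - Polynomial.C (ss i)) =
        fun i : Fin m => B - ss i • 1 := by
      funext i
      simp [Function.comp, Algebra.algebraMap_eq_smul_one]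
    rw [h]
  -- degree bound
  have hdeg : P.natDegree ≤ 2 * m := by
    have h1 : P.natDegree ≤ (List.map Polynomial.natDegree
        (List.ofFn fun i : Fin m => Polynomial.X - Polynomial.C (ss i))).sum :=
      Polynomial.natDegree_list_prod_le _
    rw [List.map_ofFn, List.sum_ofFn] at h1
    have h3 : (∑ i : Fin m, (Polynomial.natDegree ∘
        fun i : Fin m => Polynomial.X - Polynomial.C (ss i)) i) ≤ ∑ _i : Fin m, 1 :=
      Finset.sum_le_sum (fun i _ => by
        simpa using Polynomial.natDegree_X_sub_C_le (ss i))
    simp only [Finset.sum_const, Finset.card_univ, Fintype.card_fin, smul_eq_mul, mul_one] at h3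
    omega
  -- key projection property
  have hproj : ∀ (X : Matrix (Fin n) (Fin p) ℝ) (i : Fin (2 * m)),
      finner (Pproj V X) (V i) = finner X (V i) := by
    intro X i
    rw [Pproj, finner_sum_left]
    have : ∀ k : Fin (2 * m), k ∈ Finset.univ →
        finner (finner X (V k) • V k) (V i) = if k = i then finner X (V i) else 0 := by
      intro k _
      rw [finner_smul_left, horth]
      split <;> simp_all
    rw [Finset.sum_congr rfl this, Finset.sum_ite_eq' Finset.univ i]
    simp
  -- powers
  have hpow : ∀ j ≤ 2 * m, ∀ i : Fin (2 * m),
      finner (A ^ j * q) (V i) = (T ^ j).mulVec c i := by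
    intro j hj i
    rw [← hproj (A ^ j * q) i, hexact j hj, finner_sum_left]
    have : ∀ k : Fin (2 * m), k ∈ Finset.univ →
        finner ((T ^ j).mulVec c k • V k) (V i) =
          if k = i then (T ^ j).mulVec c i else 0 := by
      intro k _
      rw [finner_smul_left, horth]
      split <;> simp_all
    rw [Finset.sum_congr rfl this, Finset.sum_ite_eq' Finset.univ i]
    simp
  -- polynomial version
  have hpoly : ∀ i : Fin (2 * m),
      finner (Polynomial.aeval A P * q) (V i) = (Polynomial.aeval T P).mulVec c i := by
    intro i
    rw [Polynomial.aeval_eq_sum_range (p := P) A, Polynomial.aeval_eq_sum_range (p := P) T,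
      Matrix.sum_mul, finner_sum_left]
    have hmv : (∑ k ∈ Finset.range (P.natDegree + 1), P.coeff k • T ^ k).mulVec c i =
        ∑ k ∈ Finset.range (P.natDegree + 1), P.coeff k * ((T ^ k).mulVec c i) := by
      induction (Finset.range (P.natDegree + 1)) using Finset.induction with
      | empty => simp [Matrix.mulVec]
      | insert _ _ hx ih =>
          rw [Finset.sum_insert hx, Finset.sum_insert hx, Matrix.add_mulVec,
            Matrix.smul_mulVec, Pi.add_apply, Pi.smul_apply, smul_eq_mul, ih]
    rw [hmv]
    apply Finset.sum_congr rfl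
    intro k hk
    rw [Finset.mem_range] at hk
    rw [Matrix.smul_mul, finner_smul_left, hpow k (by omega) i]
  -- q_m(A) * q = Vhat
  have hAdet : IsUnit ((List.ofFn fun i : Fin m => A - ss i • 1).prod).det :=
    (Matrix.isUnit_iff_isUnit_det _).mp hAinv
  have hAq : Polynomial.aeval A P * q = Vhat := by
    rw [heval, hq, ← Matrix.mul_assoc, Matrix.mul_nonsing_inv _ hAdet, Matrix.one_mul]
  -- fnorm facts
  have hfn : fnorm Vhat ≠ 0 := by
    intro h0
    have := horth ⟨0, by omega⟩ ⟨0, by omega⟩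
    rw [hV1, h0, finner_smul_left, finner_smul_right] at this
    simp at this
  have hsq : finner Vhat Vhat = fnorm Vhat * fnorm Vhat := by
    rw [fnorm]
    exact (Real.mul_self_sqrt (finner_self_nonneg Vhat)).symm
  -- finner Vhat (V i)
  have hVhi : ∀ i : Fin (2 * m),
      finner Vhat (V i) = fnorm Vhat * Pi.single (M := fun _ : Fin (2*m) => ℝ) ⟨0, by omega⟩ 1 i := by
    intro i
    by_cases h : i = ⟨0, by omega⟩
    · subst h
      rw [hV1, finner_smul_right, hsq, Pi.single_eq_same]
      field_simp
    · have := horth ⟨0, by omega⟩ i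
      rw [if_neg (by simpa using (Ne.symm h)), hV1, finner_smul_left] at this
      have h2 : finner Vhat (V i) = 0 := by
        rcases mul_eq_zero.mp this with h' | h'
        · exact absurd (inv_eq_zero.mp h') hfn
        · exact h'
      rw [h2, Pi.single_eq_of_ne h]
      ring
  -- conclude: q_m(T).mulVec c = fnorm Vhat • e1
  set MT : Matrix (Fin (2 * m)) (Fin (2 * m)) ℝ := (List.ofFn fun i : Fin m => T - ss i • 1).prod
    with hMT
  have hTc : MT.mulVec c = fnorm Vhat • Pi.single (M := fun _ : Fin (2*m) => ℝ) ⟨0, by omega⟩ 1 := by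
    funext i
    have h1 := hpoly i
    rw [hAq, heval, ← hMT] at h1
    rw [← h1, hVhi i]
    simp
  have hTdet : IsUnit MT.det := (Matrix.isUnit_iff_isUnit_det _).mp hTinv
  have : (MT⁻¹).mulVec (MT.mulVec c) = c := by
    rw [Matrix.mulVec_mulVec, Matrix.nonsing_inv_mul _ hTdet, Matrix.one_mulVec]
  rw [← this, hTc, Matrix.mulVec_smul]
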